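/- arXiv:1205.6145 — 2 statements merged into one kernel-verified Lean document; each statement's English description precedes it below -/
import Mathlib

section
/- Let A and B be (n-1)×(n-1) symmetric positive semi-definite real matrices. Then 2·(det((A+B)/2))^(1/(n+1)) ≥ (det A)^(1/(n+1)) + (det B)^(1/(n+1)). -/
/-- superadditivity of geometric mean -/
lemma gm_superadd {ι : Type*} [Fintype ι] [Nonempty ι] (μ : ι → ℝ) (hμ : ∀ i, 0 ≤ μ i) :
    (∏ i, μ i) ^ (1 / (Fintype.card ι : ℝ)) + 1 ≤
      (∏ i, (μ i + 1)) ^ (1 / (Fintype.card ι : ℝ)) := by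
  set m : ℝ := (Fintype.card ι : ℝ) with hm
  have hm0 : 0 < m := by positivity
  have hP1 : (1:ℝ) ≤ ∏ i, (μ i + 1) := by
    calc (1:ℝ) = ∏ _i : ι, (1:ℝ) := by simp
    _ ≤ ∏ i, (μ i + 1) :=
      Finset.prod_le_prod (fun i _ => zero_le_one) (fun i _ => by linarith [hμ i])
  have hP0 : (0:ℝ) < ∏ i, (μ i + 1) := lt_of_lt_of_le one_pos hP1
  by_cases h0 : ∃ i, μ i = 0
  · obtain ⟨i, hi⟩ := h0
    rw [Finset.prod_eq_zero (Finset.mem_univ i) hi,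
      Real.zero_rpow (by positivity), zero_add]
    exact Real.one_le_rpow hP1 (by positivity)
  · push_neg at h0
    have hμpos : ∀ i, 0 < μ i := fun i => lt_of_le_of_ne (hμ i) (Ne.symm (h0 i))
    have hpos1 : ∀ i, (0:ℝ) < μ i + 1 := fun i => by linarith [hμ i]
    have hw : ∀ i ∈ Finset.univ (α := ι), (0:ℝ) ≤ 1/m := fun _ _ => by positivity
    have hw' : ∑ _i : ι, (1/m : ℝ) = 1 := by
      rw [Finset.sum_const, nsmul_eq_mul]
      field_simp
      rw [Finset.card_univ]
    have h1 := Real.geom_mean_le_arith_mean_weighted Finset.univ (fun _ => 1/m)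
      (fun i => μ i / (μ i + 1)) hw hw'
      (fun i _ => div_nonneg (hμ i) (hpos1 i).le)
    have h2 := Real.geom_mean_le_arith_mean_weighted Finset.univ (fun _ => 1/m)
      (fun i => 1 / (μ i + 1)) hw hw'
      (fun i _ => div_nonneg zero_le_one (hpos1 i).le)
    have hsum : ∑ i, (1/m) * (μ i / (μ i + 1)) + ∑ i, (1/m) * (1 / (μ i + 1)) = 1 := by
      rw [← Finset.sum_add_distrib]
      conv_rhs => rw [← hw']
      refine Finset.sum_congr rfl fun i _ => ?_
      have h := (hpos1 i).ne'
      rw [← mul_add, ← add_div, div_self h, mul_one]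
    have hprod1 : ∏ i, (μ i / (μ i + 1)) ^ (1/m) =
        (∏ i, μ i) ^ (1/m) / (∏ i, (μ i + 1)) ^ (1/m) := by
      rw [Real.finset_prod_rpow _ _ (fun i _ => div_nonneg (hμ i) (hpos1 i).le) _,
        Finset.prod_div_distrib,
        Real.div_rpow (Finset.prod_nonneg fun i _ => hμ i) hP0.le]
    have hprod2 : ∏ i, ((1:ℝ) / (μ i + 1)) ^ (1/m) =
        1 / (∏ i, (μ i + 1)) ^ (1/m) := by
      rw [Real.finset_prod_rpow _ _ (fun i _ => div_nonneg zero_le_one (hpos1 i).le) _,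
        Finset.prod_div_distrib, Finset.prod_const_one,
        Real.div_rpow zero_le_one hP0.le, Real.one_rpow]
    rw [hprod1] at h1
    rw [hprod2] at h2
    have hPr : (0:ℝ) < (∏ i, (μ i + 1)) ^ (1/m) := Real.rpow_pos_of_pos hP0 _
    have hfin := add_le_add h1 h2
    rw [hsum, ← add_div, div_le_one hPr] at hfin
    exact hfin

/-- concavity: x^θ + y^θ ≤ 2 ((x+y)/2)^θ for 0 < θ ≤ 1 -/
lemma rpow_add_le_two_mul (x y θ : ℝ) (hx : 0 ≤ x) (hy : 0 ≤ y) (hθ0 : 0 < θ) (hθ1 : θ ≤ 1) :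
    x ^ θ + y ^ θ ≤ 2 * ((x + y)/2) ^ θ := by
  have hp : (1:ℝ) ≤ 1/θ := by
    rw [le_div_iff₀ hθ0]; linarith
  have h := Real.arith_mean_le_rpow_mean (Finset.univ : Finset (Fin 2))
    (fun _ => (1/2 : ℝ)) (fun i => if i = 0 then x ^ θ else y ^ θ)
    (fun _ _ => by norm_num) (by simp [Finset.sum_const])
    (fun i _ => by split <;> positivity) hp
  simp only [Fin.sum_univ_two] at h
  norm_num at h
  rw [Real.rpow_rpow_inv hx (ne_of_gt hθ0), Real.rpow_rpow_inv hy (ne_of_gt hθ0)] at h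
  have harg : (x + y)/2 = 1/2*x + 1/2*y := by ring
  rw [harg]
  linarith

open Matrix in
lemma psd_det_nonneg {ι : Type*} [Fintype ι] [DecidableEq ι] {A : Matrix ι ι ℝ}
    (hA : A.PosSemidef) : 0 ≤ A.det := by
  rw [hA.1.det_eq_prod_eigenvalues]
  exact Finset.prod_nonneg fun i _ => by simpa using hA.eigenvalues_nonneg i

open Matrix in
open scoped MatrixOrder in
lemma minkowski_aux {ι : Type*} [Fintype ι] [DecidableEq ι] [Nonempty ι] {A B : Matrix ι ι ℝ}
    (hA : A.PosSemidef) (hB : B.PosSemidef) (hdB : B.det ≠ 0) :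
    A.det ^ (1/(Fintype.card ι : ℝ)) + B.det ^ (1/(Fintype.card ι : ℝ)) ≤
      (A + B).det ^ (1/(Fintype.card ι : ℝ)) := by
  set r : ℝ := 1/(Fintype.card ι : ℝ) with hr
  set S := CFC.sqrt B with hSdef
  have hS : S.PosSemidef := Matrix.nonneg_iff_posSemidef.mp (CFC.sqrt_nonneg B)
  have hSS : S * S = B := CFC.sqrt_mul_sqrt_self B hB.nonneg
  have hdSS : S.det * S.det = B.det := by rw [← det_mul, hSS]
  have hdS : S.det ≠ 0 := fun h => hdB (by rw [← hdSS, h, mul_zero])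
  have hu : IsUnit S.det := isUnit_iff_ne_zero.mpr hdS
  have hSh : Sᴴ = S := hS.1
  set M := S⁻¹ * A * S⁻¹ with hMdef
  have hM : M.PosSemidef := by
    have := hA.mul_mul_conjTranspose_same S⁻¹
    rwa [conjTranspose_nonsing_inv, hSh] at this
  have hSMS : S * M * S = A := by
    rw [hMdef, ← Matrix.mul_assoc, ← Matrix.mul_assoc, Matrix.mul_nonsing_inv _ hu,
      Matrix.one_mul, Matrix.mul_assoc, Matrix.nonsing_inv_mul _ hu, Matrix.mul_one]
  have key : A + B = S * (M + 1) * S := by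
    rw [Matrix.mul_add, Matrix.add_mul, Matrix.mul_one, hSS, hSMS]
  have hdet : (A + B).det = B.det * (M + 1).det := by
    rw [key, det_mul, det_mul, ← hdSS]; ring
  have hdetA : A.det = B.det * M.det := by
    rw [← hSMS, det_mul, det_mul, ← hdSS]; ring
  set μ := hM.1.eigenvalues with hμdef
  have hμ : ∀ i, 0 ≤ μ i := hM.eigenvalues_nonneg
  have hdM : M.det = ∏ i, μ i := by
    rw [hM.1.det_eq_prod_eigenvalues]; simp; rfl
  have hdM1 : (M + 1).det = ∏ i, (μ i + 1) := by
    set U : Matrix ι ι ℝ := (Matrix.IsHermitian.eigenvectorUnitary hM.1 : Matrix ι ι ℝ) with hU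
    have hU1 : U * star U = 1 :=
      Matrix.mem_unitaryGroup_iff.mp (Matrix.IsHermitian.eigenvectorUnitary hM.1).2
    have spec : M + 1 = U * (diagonal (RCLike.ofReal ∘ μ) + 1) * star U := by
      rw [Matrix.mul_add, Matrix.add_mul, Matrix.mul_one, hU1, hM.1.spectral_theorem, Unitary.conjStarAlgAut_apply]
    rw [spec, det_mul, det_mul]
    have hdu : U.det * (star U).det = 1 := by rw [← det_mul, hU1, det_one]
    have : ((diagonal (RCLike.ofReal ∘ μ) + 1 : Matrix ι ι ℝ)).det = ∏ i, (μ i + 1) := by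
      rw [← Matrix.diagonal_one, Matrix.diagonal_add, Matrix.det_diagonal]
      simp
    rw [this]; linear_combination (∏ i, (μ i + 1)) * hdu
  have hdB' : 0 < B.det := lt_of_le_of_ne (psd_det_nonneg hB) (Ne.symm hdB)
  have hgm := gm_superadd μ hμ
  rw [← hdM, ← hdM1, ← hr] at hgm
  have hrB : 0 < B.det ^ r := Real.rpow_pos_of_pos hdB' r
  have hMnn : 0 ≤ M.det := psd_det_nonneg hM
  have hM1nn : 0 ≤ (M+1).det := by
    rw [hdM1]; exact Finset.prod_nonneg fun i _ => by linarith [hμ i]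
  calc A.det ^ r + B.det ^ r = B.det ^ r * (M.det ^ r + 1) := by
        rw [hdetA, Real.mul_rpow hdB'.le hMnn]; ring
    _ ≤ B.det ^ r * ((M+1).det ^ r) := by
        exact mul_le_mul_of_nonneg_left hgm hrB.le
    _ = (A+B).det ^ r := by
        rw [hdet, Real.mul_rpow hdB'.le hM1nn]

open Matrix in
lemma minkowski_det {ι : Type*} [Fintype ι] [DecidableEq ι] [Nonempty ι] {A B : Matrix ι ι ℝ}
    (hA : A.PosSemidef) (hB : B.PosSemidef) :
    A.det ^ (1/(Fintype.card ι : ℝ)) + B.det ^ (1/(Fintype.card ι : ℝ)) ≤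
      (A + B).det ^ (1/(Fintype.card ι : ℝ)) := by
  have hr : (1/(Fintype.card ι : ℝ)) ≠ 0 := by positivity
  by_cases hdB : B.det = 0
  · by_cases hdA : A.det = 0
    · rw [hdA, hdB, Real.zero_rpow hr, add_zero]
      exact Real.rpow_nonneg (psd_det_nonneg (hA.add hB)) _
    · have h := minkowski_aux hB hA hdA
      rw [add_comm B A] at h
      rw [hdB, Real.zero_rpow hr, add_zero]
      calc A.det ^ (1/(Fintype.card ι : ℝ))
          ≤ B.det ^ (1/(Fintype.card ι : ℝ)) + A.det ^ (1/(Fintype.card ι : ℝ)) := by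
            rw [hdB, Real.zero_rpow hr, zero_add]
        _ ≤ (A + B).det ^ (1/(Fintype.card ι : ℝ)) := h
  · exact minkowski_aux hA hB hdB

/-- Lemma 3.2 (inequality part): for symmetric positive semi-definite
`(n-1)×(n-1)` matrices `A`, `B`,
`2·det((A+B)/2)^(1/(n+1)) ≥ det(A)^(1/(n+1)) + det(B)^(1/(n+1))`. -/
theorem det_rpow_avg_ge (n : ℕ) (hn : 2 ≤ n)
    (A B : Matrix (Fin (n - 1)) (Fin (n - 1)) ℝ)
    (hA : A.PosSemidef) (hB : B.PosSemidef) :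
    A.det ^ (1 / ((n : ℝ) + 1)) + B.det ^ (1 / ((n : ℝ) + 1)) ≤
      2 * ((2 : ℝ)⁻¹ • (A + B)).det ^ (1 / ((n : ℝ) + 1)) := by
  haveI : Nonempty (Fin (n - 1)) := ⟨⟨0, by omega⟩⟩
  set md : ℝ := ((n - 1 : ℕ) : ℝ) with hmd
  have hmd1 : (1:ℝ) ≤ md := by
    rw [hmd]; exact_mod_cast Nat.one_le_iff_ne_zero.mpr (by omega)
  have hmd0 : md ≠ 0 := by linarith
  set p : ℝ := 1 / ((n : ℝ) + 1) with hp
  have hn1 : (0:ℝ) < (n:ℝ) + 1 := by positivity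
  have hp0 : 0 < p := by rw [hp]; positivity
  set θ : ℝ := md * p with hθ
  have hθ0 : 0 < θ := by positivity
  have hθ1 : θ ≤ 1 := by
    rw [hθ, hp, hmd]
    rw [mul_one_div, div_le_one hn1]
    have : ((n - 1 : ℕ) : ℝ) ≤ ((n + 1 : ℕ) : ℝ) := by exact_mod_cast (by omega : n - 1 ≤ n + 1)
    push_cast at this
    linarith
  have ha : 0 ≤ A.det := psd_det_nonneg hA
  have hb : 0 ≤ B.det := psd_det_nonneg hB
  have hD : 0 ≤ (A + B).det := psd_det_nonneg (hA.add hB)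
  set a := A.det
  set b := B.det
  set D := (A + B).det
  set x := a ^ (1/md) with hx
  set y := b ^ (1/md) with hy
  have hx0 : 0 ≤ x := Real.rpow_nonneg ha _
  have hy0 : 0 ≤ y := Real.rpow_nonneg hb _
  have hmink : x + y ≤ D ^ (1/md) := by
    have h := minkowski_det hA hB
    rwa [Fintype.card_fin, ← hmd] at h
  have hxθ : x ^ θ = a ^ p := by
    rw [hx, ← Real.rpow_mul ha]
    congr 1
    field_simp
    ring
  have hyθ : y ^ θ = b ^ p := by
    rw [hy, ← Real.rpow_mul hb]
    congr 1
    field_simp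
    ring
  have step1 : x ^ θ + y ^ θ ≤ 2 * ((x + y)/2) ^ θ :=
    rpow_add_le_two_mul x y θ hx0 hy0 hθ0 hθ1
  have step2 : ((x + y)/2) ^ θ ≤ (D ^ (1/md) / 2) ^ θ :=
    Real.rpow_le_rpow (by positivity) (by linarith) hθ0.le
  have hRHS : 2 * ((2 : ℝ)⁻¹ • (A + B)).det ^ p = 2 * (D ^ (1/md) / 2) ^ θ := by
    rw [Matrix.det_smul, Fintype.card_fin]
    congr 1
    rw [Real.div_rpow (Real.rpow_nonneg hD _) (by norm_num), ← Real.rpow_mul hD]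
    have h1md : (1/md) * θ = p := by field_simp; ring
    rw [h1md, Real.mul_rpow (by positivity) hD, ← Real.rpow_natCast ((2:ℝ)⁻¹) (n-1),
      ← Real.rpow_mul (by norm_num : (0:ℝ) ≤ 2⁻¹), ← hmd, ← hθ,
      Real.inv_rpow (by norm_num : (0:ℝ) ≤ 2), div_eq_inv_mul]
  rw [← hxθ, ← hyθ, hRHS]
  calc x ^ θ + y ^ θ ≤ 2 * ((x + y)/2) ^ θ := step1
    _ ≤ 2 * (D ^ (1/md) / 2) ^ θ := by linarith
end

section
/- Let A and B be (n-1)×(n-1) symmetric positive semi-definite matrices with B positive definite. If 2·(det((A+B)/2))^(1/(n+1)) = (det A)^(1/(n+1)) + (det B)^(1/(n+1)), then A = B. -/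
open Finset in
lemma aux_minkowski {d : ℕ} (hd : d ≠ 0) (μ : Fin d → ℝ) (hμ : ∀ i, 0 ≤ μ i) :
    (1 + (∏ i, μ i) ^ ((d : ℝ)⁻¹)) ^ d ≤ ∏ i, (1 + μ i) := by
  have h1 : ∀ i, (0:ℝ) < 1 + μ i := fun i => by have := hμ i; linarith
  have hT0 : (0:ℝ) < ∏ i, (1 + μ i) := Finset.prod_pos (fun i _ => h1 i)
  have hQ0 : (0:ℝ) ≤ ∏ i, μ i := Finset.prod_nonneg (fun i _ => hμ i)
  have hd' : (0:ℝ) < (d:ℝ) := by exact_mod_cast Nat.pos_of_ne_zero hd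
  have hw : ∑ _i : Fin d, (d : ℝ)⁻¹ = 1 := by
    rw [Finset.sum_const, Finset.card_univ, Fintype.card_fin, nsmul_eq_mul]
    field_simp
  have g1 := Real.geom_mean_le_arith_mean_weighted Finset.univ (fun _ => (d:ℝ)⁻¹)
      (fun i => 1 / (1 + μ i)) (fun i _ => by positivity) hw
      (fun i _ => div_nonneg zero_le_one (h1 i).le)
  have g2 := Real.geom_mean_le_arith_mean_weighted Finset.univ (fun _ => (d:ℝ)⁻¹)
      (fun i => μ i / (1 + μ i)) (fun i _ => by positivity) hw
      (fun i _ => div_nonneg (hμ i) (h1 i).le)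
  rw [Real.finset_prod_rpow _ _ (fun i _ => div_nonneg zero_le_one (h1 i).le) _] at g1
  rw [Real.finset_prod_rpow _ _ (fun i _ => div_nonneg (hμ i) (h1 i).le) _] at g2
  have e1 : ∏ i, (1:ℝ) / (1 + μ i) = 1 / ∏ i, (1 + μ i) := by
    rw [Finset.prod_div_distrib, Finset.prod_const_one]
  have e2 : ∏ i, μ i / (1 + μ i) = (∏ i, μ i) / ∏ i, (1 + μ i) := by
    rw [Finset.prod_div_distrib]
  rw [e1] at g1
  rw [e2] at g2
  have hsum : (1 / ∏ i, (1 + μ i)) ^ ((d:ℝ)⁻¹) + ((∏ i, μ i) / ∏ i, (1 + μ i)) ^ ((d:ℝ)⁻¹) ≤ 1 := by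
    have := add_le_add g1 g2
    refine this.trans (le_of_eq ?_)
    rw [← Finset.sum_add_distrib]
    calc ∑ i : Fin d, ((d:ℝ)⁻¹ * (1 / (1 + μ i)) + (d:ℝ)⁻¹ * (μ i / (1 + μ i)))
        = ∑ _i : Fin d, (d:ℝ)⁻¹ := by
          refine Finset.sum_congr rfl (fun i _ => ?_)
          have := (h1 i).ne'
          field_simp
      _ = 1 := hw
  rw [Real.div_rpow (by norm_num) hT0.le, Real.div_rpow hQ0 hT0.le, Real.one_rpow,
    ← add_div, div_le_one (Real.rpow_pos_of_pos hT0 _)] at hsum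
  calc (1 + (∏ i, μ i) ^ ((d : ℝ)⁻¹)) ^ d
      ≤ ((∏ i, (1 + μ i)) ^ ((d:ℝ)⁻¹)) ^ d := by
        apply pow_le_pow_left₀ (by positivity) hsum
    _ = ∏ i, (1 + μ i) := Real.rpow_inv_natCast_pow hT0.le hd

open Finset in
lemma aux_scalar {d : ℕ} (hd : d ≠ 0) {t : ℝ} (ht : 0 < t) (hdt : (d : ℝ) * t < 1)
    (μ : Fin d → ℝ) (hμ : ∀ i, 0 ≤ μ i)
    (heq : 2 * (∏ i, ((1 + μ i) / 2)) ^ t = (∏ i, μ i) ^ t + 1) :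
    ∀ i, μ i = 1 := by
  have h1 : ∀ i, (0:ℝ) < 1 + μ i := fun i => by have := hμ i; linarith
  have hP0 : (0:ℝ) < ∏ i, ((1 + μ i) / 2) :=
    Finset.prod_pos (fun i _ => by have := h1 i; positivity)
  have hQ0 : (0:ℝ) ≤ ∏ i, μ i := Finset.prod_nonneg (fun i _ => hμ i)
  set P : ℝ := ∏ i, ((1 + μ i) / 2) with hPdef
  set Q : ℝ := ∏ i, μ i with hQdef
  set q : ℝ := Q ^ ((d:ℝ)⁻¹) with hqdef
  have hq0 : 0 ≤ q := Real.rpow_nonneg hQ0 _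
  have hd0 : (0:ℝ) < (d:ℝ) := by exact_mod_cast Nat.pos_of_ne_zero hd
  set s : ℝ := (d:ℝ) * t with hsdef
  have hs0 : 0 < s := by positivity
  have hs1 : s < 1 := hdt
  -- Minkowski bound
  have hPe : P = (∏ i, (1 + μ i)) / 2 ^ d := by
    rw [hPdef, Finset.prod_div_distrib, Finset.prod_const, Finset.card_univ, Fintype.card_fin]
  have hmink : ((1 + q) / 2) ^ d ≤ P := by
    rw [hPe, div_pow]
    gcongr
    exact aux_minkowski hd μ hμ
  have hhalf0 : (0:ℝ) < (1 + q) / 2 := by positivity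
  have hchain : ((1 + q) / 2) ^ s ≤ P ^ t := by
    calc ((1 + q) / 2) ^ s = (((1 + q) / 2) ^ d) ^ t := by
          rw [← Real.rpow_natCast ((1 + q)/2) d, ← Real.rpow_mul hhalf0.le, hsdef]
      _ ≤ P ^ t := Real.rpow_le_rpow (by positivity) hmink ht.le
  have hqs : q ^ s = Q ^ t := by
    rw [hqdef, ← Real.rpow_mul hQ0]
    congr 1
    rw [hsdef]
    field_simp
  -- q = 1
  have hq1 : q = 1 := by
    by_contra hne
    have hc := (Real.strictConcaveOn_rpow hs0 hs1).2 (Set.mem_Ici.mpr zero_le_one)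
      (Set.mem_Ici.mpr hq0) (fun h => hne h.symm) one_half_pos one_half_pos (by norm_num)
    simp only [smul_eq_mul, Real.one_rpow] at hc
    have h2 : (1/2 : ℝ) * 1 + (1/2) * q = (1 + q) / 2 := by ring
    rw [h2] at hc
    have : 1 + Q ^ t < 2 * ((1 + q) / 2) ^ s := by rw [← hqs]; linarith
    have h3 : 2 * ((1 + q) / 2) ^ s ≤ 2 * P ^ t := by linarith
    linarith
  have hQ1 : Q = 1 := by
    have := Real.rpow_inv_natCast_pow hQ0 hd
    rw [← hqdef, hq1, one_pow] at this
    exact this.symm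
  have hPt1 : P ^ t = 1 := by rw [hQ1, Real.one_rpow] at heq; linarith
  have hP1 : P = 1 := by
    rcases lt_trichotomy P 1 with h | h | h
    · exact absurd hPt1 (Real.rpow_lt_one hP0.le h ht).ne
    · exact h
    · have := (Real.one_lt_rpow_iff_of_pos hP0).mpr (Or.inl ⟨h, ht⟩)
      exact absurd hPt1 this.ne'
  have hμpos : ∀ i, 0 < μ i := by
    intro i
    rcases (hμ i).lt_or_eq with h | h
    · exact h
    · exfalso
      have : Q = 0 := Finset.prod_eq_zero (Finset.mem_univ i) h.symm
      rw [this] at hQ1; norm_num at hQ1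
  have hR1 : ∏ i, Real.sqrt (μ i) = 1 := by
    have hR0 : (0:ℝ) ≤ ∏ i, Real.sqrt (μ i) :=
      Finset.prod_nonneg (fun i _ => Real.sqrt_nonneg _)
    have hsq : (∏ i, Real.sqrt (μ i)) ^ 2 = 1 := by
      rw [← Finset.prod_pow]
      rw [show ∏ i, Real.sqrt (μ i) ^ 2 = ∏ i, μ i from
        Finset.prod_congr rfl (fun i _ => Real.sq_sqrt (hμ i)), ← hQdef, hQ1]
    calc ∏ i, Real.sqrt (μ i) = Real.sqrt ((∏ i, Real.sqrt (μ i)) ^ 2) :=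
          (Real.sqrt_sq hR0).symm
      _ = 1 := by rw [hsq, Real.sqrt_one]
  intro j
  by_contra hj
  have hle : ∀ i ∈ Finset.univ, Real.sqrt (μ i) ≤ (1 + μ i) / 2 := by
    intro i _
    nlinarith [Real.sq_sqrt (hμ i), Real.sqrt_nonneg (μ i), sq_nonneg (Real.sqrt (μ i) - 1)]
  have hsj : Real.sqrt (μ j) ≠ 1 := by
    intro h
    apply hj
    rw [← Real.sq_sqrt (hμ j), h]; norm_num
  have hstrict : Real.sqrt (μ j) < (1 + μ j) / 2 := by
    have h2 : 0 < (Real.sqrt (μ j) - 1) ^ 2 := sq_pos_iff.mpr (sub_ne_zero.mpr hsj)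
    nlinarith [Real.sq_sqrt (hμ j)]
  have := Finset.prod_lt_prod (f := fun i => Real.sqrt (μ i)) (g := fun i => (1 + μ i) / 2)
    (fun i _ => Real.sqrt_pos.mpr (hμpos i)) hle ⟨j, Finset.mem_univ j, hstrict⟩
  rw [hR1, ← hPdef, hP1] at this
  exact lt_irrefl _ this

/-- Lemma 3.2 (equality case): for symmetric positive semi-definite matrices
`A`, `B` with `B` positive definite, equality
`2·det((A+B)/2)^(1/(n+1)) = det(A)^(1/(n+1)) + det(B)^(1/(n+1))` forces `A = B`. -/
theorem det_rpow_avg_eq_iff (n : ℕ) (hn : 2 ≤ n)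
    (A B : Matrix (Fin (n - 1)) (Fin (n - 1)) ℝ)
    (hA : A.PosSemidef) (hB : B.PosSemidef) (hBpd : B.PosDef)
    (heq : 2 * ((2 : ℝ)⁻¹ • (A + B)).det ^ (1 / ((n : ℝ) + 1)) =
      A.det ^ (1 / ((n : ℝ) + 1)) + B.det ^ (1 / ((n : ℝ) + 1))) :
    A = B := by
  have hd : n - 1 ≠ 0 := by omega
  set t : ℝ := 1 / ((n : ℝ) + 1) with htdef
  have hn1 : (0:ℝ) < (n : ℝ) + 1 := by positivity
  have ht : 0 < t := by positivity
  set S := (open scoped MatrixOrder in CFC.sqrt B) with hSdef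
  have hS : S.PosSemidef := by
    open scoped MatrixOrder in exact Matrix.nonneg_iff_posSemidef.mp (CFC.sqrt_nonneg B)
  have hSS : S * S = B := by
    open scoped MatrixOrder in exact CFC.sqrt_mul_sqrt_self B hB.nonneg
  have hdetB : 0 < B.det := hBpd.det_pos
  have hdetS : S.det * S.det = B.det := by rw [← hSS, Matrix.det_mul]
  have hdetS0 : S.det ≠ 0 := by
    intro h
    rw [h, mul_zero] at hdetS
    rw [← hdetS] at hdetB
    exact lt_irrefl _ hdetB
  have hSunit : IsUnit S.det := Ne.isUnit hdetS0
  have hSinv : S * S⁻¹ = 1 := Matrix.mul_nonsing_inv S hSunit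
  have hinvS : S⁻¹ * S = 1 := Matrix.nonsing_inv_mul S hSunit
  have hSinvherm : (S⁻¹).IsHermitian := hS.1.inv
  set C := S⁻¹ * A * S⁻¹ with hCdef
  have hC : C.PosSemidef := by
    have h := hA.mul_mul_conjTranspose_same S⁻¹
    rwa [hSinvherm.eq] at h
  have hACS : S * C * S = A := by
    rw [hCdef]
    calc S * (S⁻¹ * A * S⁻¹) * S = (S * S⁻¹) * A * (S⁻¹ * S) := by
          simp only [Matrix.mul_assoc]
      _ = A := by rw [hSinv, hinvS, one_mul, mul_one]
  have hsum : S * (C + 1) * S = A + B := by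
    rw [Matrix.mul_add, Matrix.add_mul, hACS, mul_one, hSS]
  have hsmulsum : S * ((2:ℝ)⁻¹ • (C + 1)) * S = (2:ℝ)⁻¹ • (A + B) := by
    rw [Matrix.mul_smul, Matrix.smul_mul, hsum]
  -- eigenvalues
  have hCh : C.IsHermitian := hC.1
  set μ := hCh.eigenvalues with hμdef
  have hμ0 : ∀ i, 0 ≤ μ i := hC.eigenvalues_nonneg
  have hdetC : C.det = ∏ i, μ i := by
    have h := hCh.det_eq_prod_eigenvalues
    simpa using h
  set U : Matrix (Fin (n-1)) (Fin (n-1)) ℝ := (hCh.eigenvectorUnitary : Matrix (Fin (n-1)) (Fin (n-1)) ℝ) with hUdef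
  have hUU : U * star U = 1 := Matrix.mem_unitaryGroup_iff.mp hCh.eigenvectorUnitary.2
  have hsp : C = U * Matrix.diagonal (RCLike.ofReal ∘ μ) * star U := hCh.spectral_theorem
  have hdiag : Matrix.diagonal (RCLike.ofReal ∘ μ) = Matrix.diagonal μ := by
    congr 1
  have hC1 : C + 1 = U * Matrix.diagonal (fun i => μ i + 1) * star U := by
    have h1 : Matrix.diagonal (fun i => μ i + 1) = Matrix.diagonal μ + 1 := by
      rw [← Matrix.diagonal_one, Matrix.diagonal_add]
    rw [h1, Matrix.mul_add, Matrix.add_mul, mul_one, hUU, hsp, hdiag]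
  have hdetC1 : (C + 1).det = ∏ i, (μ i + 1) := by
    rw [hC1, Matrix.det_mul, Matrix.det_mul, Matrix.det_diagonal]
    have h2 : U.det * (star U).det = 1 := by rw [← Matrix.det_mul, hUU, Matrix.det_one]
    calc U.det * (∏ i, (μ i + 1)) * (star U).det
        = (∏ i, (μ i + 1)) * (U.det * (star U).det) := by ring
      _ = ∏ i, (μ i + 1) := by rw [h2, mul_one]
  have hdetM' : ((2:ℝ)⁻¹ • (C + 1)).det = ∏ i, ((1 + μ i) / 2) := by
    calc ((2:ℝ)⁻¹ • (C + 1)).det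
        = (2:ℝ)⁻¹ ^ (Fintype.card (Fin (n-1))) * ∏ i, (μ i + 1) := by
          rw [Matrix.det_smul, hdetC1]
      _ = ∏ i, ((1 + μ i) / 2) := by
          rw [Finset.prod_div_distrib, Finset.prod_const, Finset.card_univ, inv_pow,
            ← div_eq_inv_mul]
          congr 1
          exact Finset.prod_congr rfl (fun i _ => by ring)
  -- determinant identities
  have hdetA : A.det = B.det * C.det := by
    rw [← hACS, Matrix.det_mul, Matrix.det_mul, ← hdetS]; ring
  have hdetAB : ((2:ℝ)⁻¹ • (A + B)).det = B.det * ((2:ℝ)⁻¹ • (C + 1)).det := by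
    rw [← hsmulsum, Matrix.det_mul, Matrix.det_mul, ← hdetS]; ring
  -- scalar equation
  have hM'0 : (0:ℝ) ≤ ∏ i, ((1 + μ i) / 2) :=
    Finset.prod_nonneg (fun i _ => by have := hμ0 i; positivity)
  have hCd0 : (0:ℝ) ≤ ∏ i, μ i := Finset.prod_nonneg (fun i _ => hμ0 i)
  have hbt : (0:ℝ) < B.det ^ t := Real.rpow_pos_of_pos hdetB t
  have key : 2 * (∏ i, ((1 + μ i) / 2)) ^ t = (∏ i, μ i) ^ t + 1 := by
    rw [hdetAB, hdetM', hdetA, hdetC, Real.mul_rpow hdetB.le hM'0,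
      Real.mul_rpow hdetB.le hCd0] at heq
    have h3 : B.det ^ t * (2 * (∏ i, ((1 + μ i) / 2)) ^ t)
        = B.det ^ t * ((∏ i, μ i) ^ t + 1) := by ring_nf; ring_nf at heq; linarith
    exact mul_left_cancel₀ hbt.ne' h3
  have hdt : ((n - 1 : ℕ) : ℝ) * t < 1 := by
    have hcast : ((n - 1 : ℕ) : ℝ) = (n : ℝ) - 1 := by
      rw [Nat.cast_sub (by omega), Nat.cast_one]
    rw [hcast, htdef]
    rw [mul_one_div, div_lt_one hn1]
    linarith
  have hμ1 : ∀ i, μ i = 1 := aux_scalar hd ht hdt μ hμ0 key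
  have hCid : C = 1 := by
    rw [hsp, hdiag]
    have : Matrix.diagonal μ = 1 := by
      rw [show μ = fun _ => (1:ℝ) from funext hμ1]
      exact Matrix.diagonal_one
    rw [this, mul_one, hUU]
  rw [← hACS, hCid, mul_one, hSS]
end
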